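/- Finite-buffer single-class equilibrium uniqueness: for $\lambda, \mu, \nu > 0$ and integer $K \geq 1$, define for $\xi > 0$: $\tilde\theta(\xi) = \frac{\frac{\nu}{\mu}(1 - \frac{1}{\sum_{n=0}^K \xi^n})}{1 + \frac{\nu}{\mu}(1 - \frac{1}{\sum_{n=0}^K \xi^n})}$ and $\tilde\rho(\xi) = \frac{\lambda}{\mu}(1 - \frac{\xi^K}{\sum_{n=0}^K \xi^n})$. Then $\tilde\theta$ is continuous and strictly increasing on $(0,\infty)$ with $\tilde\theta(0^+) = 0$ and $\lim_{\xi\to\infty}\tilde\theta(\xi) = \frac{\nu/\mu}{1+\nu/\mu}$, while $\tilde\rho$ is continuous and strictly decreasing with $\tilde\rho(0^+) = \lambda/\mu > 0$ and $\lim_{\xi\to\infty}\tilde\rho(\xi) = 0$; hence there exists a unique $\xi > 0$ with $\tilde\theta(\xi) = \tilde\rho(\xi)$. -/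

import Mathlib

open Filter

noncomputable def Sgeo (K : ℕ) (ξ : ℝ) : ℝ := ∑ n ∈ Finset.range (K + 1), ξ ^ n

lemma Sgeo_cont (K : ℕ) : Continuous (Sgeo K) :=
  continuous_finset_sum _ fun n _ => continuous_pow n

lemma Sgeo_zero (K : ℕ) : Sgeo K 0 = 1 := by
  unfold Sgeo
  rw [Finset.sum_eq_single 0]
  · simp
  · intro n _ hn; simp [zero_pow hn]
  · simp

lemma Sgeo_gt_one {K : ℕ} (hK : 1 ≤ K) {ξ : ℝ} (hξ : 0 < ξ) : 1 < Sgeo K ξ := by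
  have h0 : (0:ℕ) ∈ Finset.range (K+1) := by simp
  have h1 : (1:ℕ) ∈ Finset.range (K+1) := Finset.mem_range.2 (by omega)
  have := Finset.single_lt_sum (f := fun n => ξ ^ n) (i := 0) (j := 1)
    (by norm_num) h0 h1 (by simpa using hξ)
    (fun k _ _ => by positivity)
  unfold Sgeo
  simpa using this

lemma Sgeo_pos {K : ℕ} (hK : 1 ≤ K) {ξ : ℝ} (hξ : 0 < ξ) : 0 < Sgeo K ξ :=
  lt_trans one_pos (Sgeo_gt_one hK hξ)

lemma Sgeo_lt {K : ℕ} (hK : 1 ≤ K) {a b : ℝ} (ha : 0 ≤ a) (hab : a < b) :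
    Sgeo K a < Sgeo K b := by
  unfold Sgeo
  apply Finset.sum_lt_sum
  · intro n _; exact pow_le_pow_left₀ ha hab.le n
  · exact ⟨1, Finset.mem_range.2 (by omega), by simpa using hab⟩

lemma Sgeo_ratio_lt {K : ℕ} (hK : 1 ≤ K) {a b : ℝ} (ha : 0 < a) (hab : a < b) :
    a ^ K / Sgeo K a < b ^ K / Sgeo K b := by
  have hb : 0 < b := ha.trans hab
  have hSa : 0 < Sgeo K a := Sgeo_pos hK ha
  have hSb : 0 < Sgeo K b := Sgeo_pos hK hb
  rw [div_lt_div_iff₀ hSa hSb]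
  unfold Sgeo
  rw [Finset.mul_sum, Finset.mul_sum]
  apply Finset.sum_lt_sum
  · intro n hn
    have hn' : n ≤ K := by simpa [Nat.lt_succ_iff] using hn
    calc a ^ K * b ^ n = a ^ n * b ^ n * a ^ (K - n) := by
          rw [← pow_mul_pow_sub a hn']; ring
      _ ≤ a ^ n * b ^ n * b ^ (K - n) := by
          apply mul_le_mul_of_nonneg_left (pow_le_pow_left₀ ha.le hab.le _) (by positivity)
      _ = b ^ K * a ^ n := by rw [← pow_mul_pow_sub b hn']; ring
  · refine ⟨0, by simp, ?_⟩
    simpa using pow_lt_pow_left₀ hab ha.le (by omega : K ≠ 0)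

lemma Sgeo_inv_mul {K : ℕ} {ξ : ℝ} (hξ : 0 < ξ) :
    Sgeo K ξ⁻¹ * ξ ^ K = Sgeo K ξ := by
  unfold Sgeo
  rw [Finset.sum_mul, ← Finset.sum_range_reflect (fun n => ξ ^ n) (K+1)]
  apply Finset.sum_congr rfl
  intro n hn
  have hn' : n ≤ K := by simpa [Nat.lt_succ_iff] using hn
  rw [inv_pow, inv_mul_eq_div, div_eq_iff (pow_ne_zero n hξ.ne'), ← pow_add]
  congr 1
  omega

/-- Finite-buffer single-class model: monotonicity, boundary limits of throughput and
effective load, and existence and uniqueness of the equilibrium activity factor. -/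
theorem finite_buffer_equilibrium_unique
    (lam mu nu : ℝ) (hlam : 0 < lam) (hmu : 0 < mu) (hnu : 0 < nu)
    (K : ℕ) (hK : 1 ≤ K)
    (θ ρ : ℝ → ℝ)
    (hθ : ∀ ξ, θ ξ =
      (nu / mu * (1 - 1 / ∑ n ∈ Finset.range (K + 1), ξ ^ n)) /
        (1 + nu / mu * (1 - 1 / ∑ n ∈ Finset.range (K + 1), ξ ^ n)))
    (hρ : ∀ ξ, ρ ξ =
      lam / mu * (1 - ξ ^ K / ∑ n ∈ Finset.range (K + 1), ξ ^ n)) :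
    ContinuousOn θ (Set.Ioi 0) ∧ StrictMonoOn θ (Set.Ioi 0) ∧
    Tendsto θ (nhdsWithin 0 (Set.Ioi 0)) (nhds 0) ∧
    Tendsto θ atTop (nhds ((nu / mu) / (1 + nu / mu))) ∧
    ContinuousOn ρ (Set.Ioi 0) ∧ StrictAntiOn ρ (Set.Ioi 0) ∧
    Tendsto ρ (nhdsWithin 0 (Set.Ioi 0)) (nhds (lam / mu)) ∧ 0 < lam / mu ∧
    Tendsto ρ atTop (nhds 0) ∧
    (∃! ξ : ℝ, ξ ∈ Set.Ioi (0:ℝ) ∧ θ ξ = ρ ξ) := by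
  have hnm : 0 < nu / mu := div_pos hnu hmu
  have hlm : 0 < lam / mu := div_pos hlam hmu
  -- rewrite in terms of Sgeo
  have hθ' : θ = fun ξ => (nu / mu * (1 - 1 / Sgeo K ξ)) /
      (1 + nu / mu * (1 - 1 / Sgeo K ξ)) := funext hθ
  have hρ' : ρ = fun ξ => lam / mu * (1 - ξ ^ K / Sgeo K ξ) := funext hρ
  subst hθ' hρ'
  set f : ℝ → ℝ := fun ξ => nu / mu * (1 - 1 / Sgeo K ξ) with hf
  have hScont : Continuous (Sgeo K) := Sgeo_cont K
  have hSne : ∀ ξ ∈ Set.Ioi (0:ℝ), Sgeo K ξ ≠ 0 := fun ξ hξ => (Sgeo_pos hK hξ).ne'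
  have hf_nonneg : ∀ ξ : ℝ, 0 < ξ → 0 ≤ f ξ := by
    intro ξ hξ
    have h1 : 1 < Sgeo K ξ := Sgeo_gt_one hK hξ
    have : 1 / Sgeo K ξ ≤ 1 := by
      rw [div_le_one (by linarith)]; linarith
    have : 0 ≤ 1 - 1 / Sgeo K ξ := by linarith
    positivity
  have hf_lt : ∀ a b : ℝ, 0 < a → a < b → f a < f b := by
    intro a b ha hab
    have hb : 0 < b := ha.trans hab
    have hSa : 0 < Sgeo K a := Sgeo_pos hK ha
    have hSb : 0 < Sgeo K b := Sgeo_pos hK hb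
    have hlt : 1 / Sgeo K b < 1 / Sgeo K a :=
      one_div_lt_one_div_of_lt hSa (Sgeo_lt hK ha.le hab)
    have : 1 - 1 / Sgeo K a < 1 - 1 / Sgeo K b := by linarith
    exact mul_lt_mul_of_pos_left this hnm
  have hfcont : ContinuousOn f (Set.Ioi 0) := by
    apply continuousOn_const.mul
    apply continuousOn_const.sub
    exact continuousOn_const.div hScont.continuousOn hSne
  -- θ continuity
  have hθcont : ContinuousOn (fun ξ => f ξ / (1 + f ξ)) (Set.Ioi 0) := by
    apply hfcont.div (continuousOn_const.add hfcont)
    intro ξ hξ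
    have := hf_nonneg ξ hξ
    show 1 + f ξ ≠ 0
    linarith
  -- θ strict mono
  have hθmono : StrictMonoOn (fun ξ => f ξ / (1 + f ξ)) (Set.Ioi 0) := by
    intro a ha b hb hab
    have ha' : (0:ℝ) < a := ha
    have hfa := hf_nonneg a ha'
    have hfb := hf_nonneg b hb
    have hab' := hf_lt a b ha' hab
    have h1a : (0:ℝ) < 1 + f a := by linarith
    have h1b : (0:ℝ) < 1 + f b := by linarith
    rw [div_lt_div_iff₀ h1a h1b]
    nlinarith
  -- θ limit at 0⁺
  have hθ0 : Tendsto (fun ξ => f ξ / (1 + f ξ)) (nhdsWithin 0 (Set.Ioi 0)) (nhds 0) := by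
    have hfc0 : Tendsto f (nhds 0) (nhds 0) := by
      have : ContinuousAt f 0 := by
        apply ContinuousAt.mul continuousAt_const
        apply ContinuousAt.sub continuousAt_const
        exact (continuousAt_const.div hScont.continuousAt (by rw [Sgeo_zero]; norm_num))
      simpa [hf, Sgeo_zero] using this.tendsto
    have : Tendsto (fun ξ => f ξ / (1 + f ξ)) (nhds 0) (nhds (0 / (1 + 0))) :=
      hfc0.div (tendsto_const_nhds.add hfc0) (by norm_num)
    simpa using this.mono_left nhdsWithin_le_nhds
  -- θ limit at atTop
  have hSinv : Tendsto (fun ξ => 1 / Sgeo K ξ) atTop (nhds 0) := by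
    have hStop : Tendsto (Sgeo K) atTop atTop := by
      apply tendsto_atTop_mono' atTop ?_ tendsto_id
      filter_upwards [eventually_ge_atTop (0:ℝ)] with ξ hξ
      have h1 : ξ ^ 1 ≤ Sgeo K ξ :=
        Finset.single_le_sum (f := fun n => ξ ^ n)
          (fun n _ => by positivity) (Finset.mem_range.2 (by omega))
      simpa using h1
    simpa [one_div, Function.comp_def] using tendsto_inv_atTop_zero.comp hStop
  have hθtop : Tendsto (fun ξ => f ξ / (1 + f ξ)) atTop (nhds ((nu / mu) / (1 + nu / mu))) := by
    have hftop : Tendsto f atTop (nhds (nu / mu)) := by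
      have := (tendsto_const_nhds (x := (1:ℝ)) (f := atTop)).sub hSinv
      have := (tendsto_const_nhds (x := nu / mu) (f := atTop)).mul this
      simpa [hf] using this
    have : Tendsto (fun ξ => f ξ / (1 + f ξ)) atTop
        (nhds ((nu / mu) / (1 + nu / mu))) :=
      hftop.div (tendsto_const_nhds.add hftop) (by positivity)
    exact this
  -- ρ continuity
  have hρcont : ContinuousOn (fun ξ => lam / mu * (1 - ξ ^ K / Sgeo K ξ)) (Set.Ioi 0) := by
    apply continuousOn_const.mul
    apply continuousOn_const.sub
    exact (continuous_pow K).continuousOn.div hScont.continuousOn hSne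
  -- ρ strict anti
  have hρanti : StrictAntiOn (fun ξ => lam / mu * (1 - ξ ^ K / Sgeo K ξ)) (Set.Ioi 0) := by
    intro a ha b hb hab
    have := Sgeo_ratio_lt hK (show (0:ℝ) < a from ha) hab
    have h2 : 1 - b ^ K / Sgeo K b < 1 - a ^ K / Sgeo K a := by linarith
    exact mul_lt_mul_of_pos_left h2 hlm
  -- ρ limit at 0⁺
  have hρ0 : Tendsto (fun ξ => lam / mu * (1 - ξ ^ K / Sgeo K ξ))
      (nhdsWithin 0 (Set.Ioi 0)) (nhds (lam / mu)) := by
    have : ContinuousAt (fun ξ => lam / mu * (1 - ξ ^ K / Sgeo K ξ)) 0 := by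
      apply ContinuousAt.mul continuousAt_const
      apply ContinuousAt.sub continuousAt_const
      exact ((continuous_pow K).continuousAt).div hScont.continuousAt
        (by rw [Sgeo_zero]; norm_num)
    have h := this.tendsto
    rw [show lam / mu * (1 - (0:ℝ) ^ K / Sgeo K 0) = lam / mu by
      simp [Sgeo_zero, zero_pow (by omega : K ≠ 0)]] at h
    exact h.mono_left nhdsWithin_le_nhds
  -- ρ limit at atTop
  have hρtop : Tendsto (fun ξ => lam / mu * (1 - ξ ^ K / Sgeo K ξ)) atTop (nhds 0) := by
    have hinv0 : Tendsto (fun ξ : ℝ => ξ⁻¹) atTop (nhds 0) := tendsto_inv_atTop_zero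
    have hScomp : Tendsto (fun ξ => Sgeo K ξ⁻¹) atTop (nhds 1) := by
      have := (hScont.continuousAt (x := (0:ℝ))).tendsto.comp hinv0
      simpa [Sgeo_zero, Function.comp_def] using this
    have hratio : Tendsto (fun ξ => ξ ^ K / Sgeo K ξ) atTop (nhds 1) := by
      have hdiv : Tendsto (fun ξ => (Sgeo K ξ⁻¹)⁻¹) atTop (nhds 1) := by
        simpa using hScomp.inv₀ (by norm_num)
      apply hdiv.congr'
      filter_upwards [eventually_gt_atTop (0:ℝ)] with ξ hξ
      have hi : 0 < ξ⁻¹ := inv_pos.2 hξ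
      have hS : 0 < Sgeo K ξ⁻¹ := Sgeo_pos hK hi
      have hS' : 0 < Sgeo K ξ := Sgeo_pos hK hξ
      rw [inv_eq_one_div, div_eq_div_iff hS.ne' hS'.ne', one_mul, mul_comm]
      exact (Sgeo_inv_mul (K := K) hξ).symm
    have : Tendsto (fun ξ => lam / mu * (1 - ξ ^ K / Sgeo K ξ)) atTop
        (nhds (lam / mu * (1 - 1))) :=
      tendsto_const_nhds.mul (tendsto_const_nhds.sub hratio)
    simpa using this
  -- existence and uniqueness
  set g : ℝ → ℝ := fun ξ => f ξ / (1 + f ξ) - lam / mu * (1 - ξ ^ K / Sgeo K ξ) with hg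
  have hgmono : StrictMonoOn g (Set.Ioi 0) := by
    intro a ha b hb hab
    have h1 : f a / (1 + f a) < f b / (1 + f b) := hθmono ha hb hab
    have h2 : lam / mu * (1 - b ^ K / Sgeo K b) < lam / mu * (1 - a ^ K / Sgeo K a) :=
      hρanti ha hb hab
    show f a / (1 + f a) - lam / mu * (1 - a ^ K / Sgeo K a) <
      f b / (1 + f b) - lam / mu * (1 - b ^ K / Sgeo K b)
    linarith
  have hgneg : ∃ a : ℝ, a ∈ Set.Ioi (0:ℝ) ∧ g a < 0 := by
    have hgl : Tendsto g (nhdsWithin 0 (Set.Ioi 0)) (nhds (0 - lam / mu)) := hθ0.sub hρ0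
    have hev : ∀ᶠ ξ in nhdsWithin 0 (Set.Ioi 0), g ξ < 0 :=
      hgl.eventually_lt_const (by linarith)
    have hmem : ∀ᶠ ξ in nhdsWithin 0 (Set.Ioi 0), ξ ∈ Set.Ioi (0:ℝ) :=
      eventually_mem_nhdsWithin
    exact (hmem.and hev).exists
  obtain ⟨a, ha, hga⟩ := hgneg
  have hgpos : ∃ b : ℝ, a < b ∧ g b > 0 := by
    have hgl : Tendsto g atTop (nhds ((nu / mu) / (1 + nu / mu) - 0)) := hθtop.sub hρtop
    rw [sub_zero] at hgl
    have hev : ∀ᶠ ξ in atTop, 0 < g ξ :=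
      hgl.eventually_const_lt (by positivity)
    exact ((eventually_gt_atTop a).and hev).exists.imp (fun b hb => ⟨hb.1, hb.2⟩)
  obtain ⟨b, hab, hgb⟩ := hgpos
  have hb : b ∈ Set.Ioi (0:ℝ) := lt_trans ha hab
  have hsub : Set.Icc a b ⊆ Set.Ioi (0:ℝ) := fun x hx => lt_of_lt_of_le ha hx.1
  have hgcont : ContinuousOn g (Set.Icc a b) :=
    (hθcont.sub hρcont).mono hsub
  have hivt := intermediate_value_Icc hab.le hgcont
  have h0mem : (0:ℝ) ∈ Set.Icc (g a) (g b) := ⟨hga.le, hgb.le⟩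
  obtain ⟨c, hc, hgc⟩ := hivt h0mem
  have hcpos : c ∈ Set.Ioi (0:ℝ) := hsub hc
  refine ⟨hθcont, hθmono, hθ0, hθtop, hρcont, hρanti, hρ0, hlm, hρtop, c, ⟨hcpos, ?_⟩, ?_⟩
  · have h1 : f c / (1 + f c) - lam / mu * (1 - c ^ K / Sgeo K c) = 0 := hgc
    show f c / (1 + f c) = lam / mu * (1 - c ^ K / Sgeo K c)
    linarith
  · rintro x ⟨hx, hxeq⟩
    have hxeq' : f x / (1 + f x) = lam / mu * (1 - x ^ K / Sgeo K x) := hxeq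
    have hgx : g x = 0 := by
      show f x / (1 + f x) - lam / mu * (1 - x ^ K / Sgeo K x) = 0
      linarith
    have hgc0 : g c = 0 := hgc
    exact hgmono.injOn hx hcpos (by rw [hgx, hgc0])
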